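/- Let E be a real Banach space, let x₀, g ∈ E, let L ≥ 0, and let v : ℝ → E → E be such that for every t ∈ [0,1] the map v t : E → E is Lipschitz with constant L, and t ↦ v(t, (1−t)·x₀ + t·g) is continuous on [0,1]. Suppose ψ : ℝ → E satisfies ψ 0 = x₀ and has derivative (d/dt) ψ(t) = v(t, ψ(t)) at every t ∈ [0,1]. Then the endpoint of the flow satisfies the Grönwall-type discrepancy bound ‖ψ(1) − g‖ ≤ exp(L) · ∫_0^1 ‖v(t, (1−t)·x₀ + t·g) − (g − x₀)‖ dt, i.e., the distance of the flow endpoint from g is controlled, up to the factor e^L, by the time-integrated deviation of the velocity field from the straight-line target velocity g − x₀ evaluated along the linear interpolation path. (Grönwall flow-discrepancy bound underlying Proposition 2.) -/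

import Mathlib

/-- Grönwall flow-discrepancy bound underlying Proposition 2: the distance of
the flow endpoint `ψ 1` from `g` is controlled, up to `e^L`, by the
time-integrated deviation of the velocity field from the straight-line target
velocity `g − x₀` along the linear interpolation path. -/
theorem gronwall_flow_discrepancy {E : Type*} [NormedAddCommGroup E]
    [NormedSpace ℝ E] [CompleteSpace E]
    (x₀ g : E) (L : ℝ) (hL : 0 ≤ L)
    (v : ℝ → E → E)
    (hlip : ∀ t ∈ Set.Icc (0 : ℝ) 1, LipschitzWith L.toNNReal (v t))
    (hcont : ContinuousOn
      (fun t : ℝ => v t ((1 - t) • x₀ + t • g)) (Set.Icc (0 : ℝ) 1))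
    (ψ : ℝ → E) (hψ0 : ψ 0 = x₀)
    (hderiv : ∀ t ∈ Set.Icc (0 : ℝ) 1, HasDerivAt ψ (v t (ψ t)) t) :
    ‖ψ 1 - g‖ ≤ Real.exp L *
      ∫ t in (0 : ℝ)..1, ‖v t ((1 - t) • x₀ + t • g) - (g - x₀)‖ := by
  set φ : ℝ → E := fun t => (1 - t) • x₀ + t • g with hφdef
  -- continuous extension of the forcing term
  set w : ℝ → E := Set.IccExtend zero_le_one
      ((Set.Icc (0:ℝ) 1).restrict (fun t => v t (φ t))) with hwdef
  have hwcont : Continuous w := Continuous.Icc_extend' hcont.restrict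
  have hw_eq : ∀ t ∈ Set.Icc (0:ℝ) 1, w t = v t (φ t) := by
    intro t ht
    simp [hwdef, Set.IccExtend_of_mem zero_le_one _ ht]
    rfl
  set ε : ℝ → ℝ := fun t => ‖w t - (g - x₀)‖ with hεdef
  have hεcont : Continuous ε := (hwcont.sub continuous_const).norm
  have hεnonneg : ∀ t, 0 ≤ ε t := fun t => norm_nonneg _
  set F : ℝ → ℝ := fun t => ∫ s in (0:ℝ)..t, ε s with hFdef
  have hF : ∀ t : ℝ, HasDerivAt F (ε t) t := fun t =>
    (hεcont.integral_hasStrictDerivAt 0 t).hasDerivAt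
  -- derivative of the path
  have hφ : ∀ t : ℝ, HasDerivAt φ (g - x₀) t := by
    intro t
    have h1 : HasDerivAt φ ((-1 : ℝ) • x₀ + (1 : ℝ) • g) t :=
      (((hasDerivAt_id t).const_sub 1).smul_const x₀).add
        ((hasDerivAt_id t).smul_const g)
    have h2 : ((-1 : ℝ) • x₀ + (1 : ℝ) • g) = g - x₀ := by module
    rwa [h2] at h1
  set δ : ℝ → E := fun t => ψ t - φ t with hδdef
  have hδderiv : ∀ t ∈ Set.Icc (0:ℝ) 1,
      HasDerivAt δ (v t (ψ t) - (g - x₀)) t := fun t ht =>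
    (hderiv t ht).sub (hφ t)
  have hδcont : ContinuousOn δ (Set.Icc (0:ℝ) 1) := fun t ht =>
    ((hδderiv t ht).continuousAt).continuousWithinAt
  -- main Grönwall estimate with parameter η > 0
  have key : ∀ η > (0:ℝ), ‖δ 1‖ ≤ Real.exp L * (F 1 + η * 2) := by
    intro η hη
    set B : ℝ → ℝ := fun t => Real.exp (L * t) * (F t + η * (t + 1)) with hBdef
    set B' : ℝ → ℝ := fun t =>
      L * (Real.exp (L * t) * (F t + η * (t + 1))) + Real.exp (L * t) * (ε t + η)
      with hB'def
    have hB : ∀ t : ℝ, HasDerivAt B (B' t) t := by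
      intro t
      have he : HasDerivAt (fun t : ℝ => Real.exp (L * t)) (L * Real.exp (L * t)) t := by
        simpa [mul_comm] using ((hasDerivAt_id t).const_mul L).exp
      have hg : HasDerivAt (fun t : ℝ => F t + η * (t + 1)) (ε t + η) t := by
        have h := (hF t).add (((hasDerivAt_id t).add_const 1).const_mul η)
        rw [mul_one] at h; exact h
      have h := he.mul hg
      rw [mul_assoc] at h; exact h
    have main : ∀ ⦃x⦄, x ∈ Set.Icc (0:ℝ) 1 → ‖δ x‖ ≤ B x := by
      apply image_norm_le_of_norm_deriv_right_lt_deriv_boundary'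
        (f' := fun t => v t (ψ t) - (g - x₀)) hδcont
        (fun t ht => ((hδderiv t (Set.mem_Icc_of_Ico ht)).hasDerivWithinAt))
      · -- ‖δ 0‖ ≤ B 0
        have : δ 0 = 0 := by simp [hδdef, hφdef, hψ0]
        rw [this]
        simp only [hBdef, norm_zero]
        have : F 0 = 0 := by simp [hFdef]
        rw [this]
        positivity
      · exact fun t _ => (hB t).continuousAt.continuousWithinAt
      · exact fun t _ => (hB t).hasDerivWithinAt
      · -- the strict bound at contact points
        intro t ht heq
        have ht' : t ∈ Set.Icc (0:ℝ) 1 := Set.mem_Icc_of_Ico ht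
        have hLip := (hlip t ht').dist_le_mul (ψ t) (φ t)
        rw [Real.coe_toNNReal L hL] at hLip
        have h1 : ‖v t (ψ t) - (g - x₀)‖
            ≤ L * ‖δ t‖ + ε t := by
          have htri : ‖v t (ψ t) - (g - x₀)‖
              ≤ ‖v t (ψ t) - v t (φ t)‖ + ‖v t (φ t) - (g - x₀)‖ := by
            simpa using norm_sub_le_norm_sub_add_norm_sub (v t (ψ t)) (v t (φ t)) (g - x₀)
          have h2 : ‖v t (ψ t) - v t (φ t)‖ ≤ L * ‖δ t‖ := by
            simpa [hδdef, dist_eq_norm] using hLip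
          have h3 : ε t = ‖v t (φ t) - (g - x₀)‖ := by
            show ‖w t - (g - x₀)‖ = _
            rw [hw_eq t ht']
          calc ‖v t (ψ t) - (g - x₀)‖
              ≤ ‖v t (ψ t) - v t (φ t)‖ + ‖v t (φ t) - (g - x₀)‖ := htri
            _ ≤ L * ‖δ t‖ + ε t := by rw [← h3] at htri ⊢; exact add_le_add_left h2 _
        have hexp : (1:ℝ) ≤ Real.exp (L * t) :=
          Real.one_le_exp (mul_nonneg hL ht.1)
        have h4 : ε t + η ≤ Real.exp (L * t) * (ε t + η) :=
          le_mul_of_one_le_left (by positivity) hexp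
        calc ‖v t (ψ t) - (g - x₀)‖ ≤ L * ‖δ t‖ + ε t := h1
          _ = L * B t + ε t := by rw [heq]
          _ < L * B t + (ε t + η) := by linarith
          _ ≤ B' t := by
              rw [hB'def, hBdef]
              exact add_le_add_right h4 _
    have h1 := main (Set.mem_Icc.mpr ⟨zero_le_one, le_refl 1⟩)
    calc ‖δ 1‖ ≤ B 1 := h1
      _ = Real.exp L * (F 1 + η * 2) := by
          show Real.exp (L * 1) * (F 1 + η * (1 + 1)) = _
          rw [mul_one]; ring
  -- pass to the limit η → 0
  have hδ1 : δ 1 = ψ 1 - g := by simp [hδdef, hφdef]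
  have hF1 : F 1 = ∫ t in (0:ℝ)..1, ‖v t ((1 - t) • x₀ + t • g) - (g - x₀)‖ := by
    apply intervalIntegral.integral_congr
    intro t ht
    rw [Set.uIcc_of_le zero_le_one] at ht
    simp only [hεdef]
    rw [hw_eq t ht]
  rw [← hδ1, ← hF1]
  refine le_of_forall_pos_le_add ?_
  intro c hc
  have hη : (0:ℝ) < c / (2 * Real.exp L) := by positivity
  have := key _ hη
  have hE : (0:ℝ) < Real.exp L := Real.exp_pos L
  calc ‖δ 1‖ ≤ Real.exp L * (F 1 + c / (2 * Real.exp L) * 2) := this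
    _ = Real.exp L * F 1 + c := by field_simp
    _ ≤ Real.exp L * F 1 + c := le_refl _
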